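/- Let Γ be a simple graph on a vertex set V and let v, w be distinct vertices with lk(v) ⊆ st(w). Then the transvection sending v to vw is an automorphism of the right-angled Artin group A_Γ: there exists a group automorphism φ of A_Γ such that φ(of v) = of v * of w and φ(of u) = of u for every vertex u ≠ v. -/

import Mathlib

/-- The link of a vertex: the set of vertices adjacent to it. -/
def SimpleGraph.lk {V : Type*} (Γ : SimpleGraph V) (v : V) : Set V :=
  {w | Γ.Adj v w}

/-- The star of a vertex: its link together with the vertex itself. -/
def SimpleGraph.st {V : Type*} (Γ : SimpleGraph V) (v : V) : Set V :=
  Γ.lk v ∪ {v}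

/-- The set of commutator relators of a right-angled Artin group. -/
def raagRels {V : Type*} (Γ : SimpleGraph V) : Set (FreeGroup V) :=
  {r | ∃ u v : V, Γ.Adj u v ∧
    r = FreeGroup.of u * FreeGroup.of v * (FreeGroup.of u)⁻¹ * (FreeGroup.of v)⁻¹}

/-- The right-angled Artin group of the graph `Γ`. -/
abbrev RAAG {V : Type*} (Γ : SimpleGraph V) : Type _ :=
  PresentedGroup (raagRels Γ)

/-- The canonical generator of `RAAG Γ` corresponding to a vertex. -/
def RAAG.of {V : Type*} (Γ : SimpleGraph V) (v : V) : RAAG Γ :=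
  PresentedGroup.of v


/-- Adjacent generators commute in the RAAG. -/
lemma raag_comm {V : Type*} (Γ : SimpleGraph V) {u v : V} (h : Γ.Adj u v) :
    Commute (RAAG.of Γ u) (RAAG.of Γ v) := by
  have h1 : (QuotientGroup.mk (FreeGroup.of u * FreeGroup.of v * (FreeGroup.of u)⁻¹ *
      (FreeGroup.of v)⁻¹) : RAAG Γ) = 1 := by
    rw [QuotientGroup.eq_one_iff]
    exact Subgroup.subset_normalClosure ⟨u, v, h, rfl⟩
  have h2 : RAAG.of Γ u * RAAG.of Γ v * (RAAG.of Γ u)⁻¹ * (RAAG.of Γ v)⁻¹ = 1 := by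
    exact h1
  have h3 : (RAAG.of Γ u * RAAG.of Γ v) * (RAAG.of Γ v * RAAG.of Γ u)⁻¹ = 1 := by
    rw [mul_inv_rev, ← mul_assoc]; exact h2
  exact mul_inv_eq_one.mp h3

/-- If `lk(v) ⊆ st(w)` then the transvection `v ↦ vw` is an automorphism of
the right-angled Artin group `A_Γ`. -/
theorem raag_transvection_aut {V : Type*} (Γ : SimpleGraph V) (v w : V)
    (hne : v ≠ w) (hlk : Γ.lk v ⊆ Γ.st w) :
    ∃ φ : MulAut (RAAG Γ),
      φ (RAAG.of Γ v) = RAAG.of Γ v * RAAG.of Γ w ∧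
        ∀ u : V, u ≠ v → φ (RAAG.of Γ u) = RAAG.of Γ u := by
  classical
  have key : ∀ b : V, Γ.Adj v b →
      Commute (RAAG.of Γ v) (RAAG.of Γ b) ∧ Commute (RAAG.of Γ w) (RAAG.of Γ b) := by
    intro b hb
    refine ⟨raag_comm Γ hb, ?_⟩
    rcases hlk hb with h | h
    · exact raag_comm Γ h
    · simp only [Set.mem_singleton_iff] at h
      subst h; exact Commute.refl _
  set f : V → RAAG Γ := fun u => if u = v then RAAG.of Γ v * RAAG.of Γ w else RAAG.of Γ u with hf
  set g : V → RAAG Γ := fun u =>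
    if u = v then RAAG.of Γ v * (RAAG.of Γ w)⁻¹ else RAAG.of Γ u with hg
  have commf : ∀ a b : V, Γ.Adj a b → Commute (f a) (f b) := by
    intro a b hab
    simp only [hf]
    split_ifs with h1 h2 h2
    · exact absurd (h1 ▸ h2 ▸ hab) (Γ.irrefl)
    · subst h1
      exact (key b hab).1.mul_left (key b hab).2
    · subst h2
      exact ((key a hab.symm).1.mul_left (key a hab.symm).2).symm
    · exact raag_comm Γ hab
  have commg : ∀ a b : V, Γ.Adj a b → Commute (g a) (g b) := by
    intro a b hab
    simp only [hg]
    split_ifs with h1 h2 h2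
    · exact absurd (h1 ▸ h2 ▸ hab) (Γ.irrefl)
    · subst h1
      exact (key b hab).1.mul_left (key b hab).2.inv_left
    · subst h2
      exact ((key a hab.symm).1.mul_left (key a hab.symm).2.inv_left).symm
    · exact raag_comm Γ hab
  have relcheck : ∀ (h : V → RAAG Γ), (∀ a b : V, Γ.Adj a b → Commute (h a) (h b)) →
      ∀ r ∈ raagRels Γ, FreeGroup.lift h r = 1 := by
    rintro h hcomm r ⟨a, b, hab, rfl⟩
    simp only [map_mul, map_inv, FreeGroup.lift_apply_of]
    rw [(hcomm a b hab).eq]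
    group
  have relid : ∀ r ∈ raagRels Γ, FreeGroup.lift (fun u => (PresentedGroup.of u : RAAG Γ)) r = 1 := by
    rintro r ⟨a, b, hab, rfl⟩
    simp only [map_mul, map_inv, FreeGroup.lift_apply_of]
    show RAAG.of Γ a * RAAG.of Γ b * (RAAG.of Γ a)⁻¹ * (RAAG.of Γ b)⁻¹ = 1
    rw [(raag_comm Γ hab).eq]
    group
  have hrelf := relcheck f commf
  have hrelg := relcheck g commg
  set F := PresentedGroup.toGroup hrelf with hF
  set G := PresentedGroup.toGroup hrelg with hG
  have hFof : ∀ u : V, F (RAAG.of Γ u) = f u := fun u => PresentedGroup.toGroup.of hrelf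
  have hGof : ∀ u : V, G (RAAG.of Γ u) = g u := fun u => PresentedGroup.toGroup.of hrelg
  have hGF : ∀ x, G (F x) = x := by
    intro x
    have hid : ∀ u : V, (G.comp F) (PresentedGroup.of u) = PresentedGroup.of u := by
      intro u
      show G (F (RAAG.of Γ u)) = RAAG.of Γ u
      rw [hFof]
      by_cases h : u = v
      · subst h
        simp only [hf, if_pos rfl, map_mul, hGof]
        simp only [hg, if_pos rfl, if_neg (Ne.symm hne)]
        group
      · simp only [hf, if_neg h, hGof, hg, if_neg h]
    have h1 := PresentedGroup.toGroup.unique relid (G.comp F) hid (x := x)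
    have h2 := PresentedGroup.toGroup.unique relid (MonoidHom.id _) (fun u => rfl) (x := x)
    exact h1.trans h2.symm
  have hFG : ∀ x, F (G x) = x := by
    intro x
    have hid : ∀ u : V, (F.comp G) (PresentedGroup.of u) = PresentedGroup.of u := by
      intro u
      show F (G (RAAG.of Γ u)) = RAAG.of Γ u
      rw [hGof]
      by_cases h : u = v
      · subst h
        simp only [hg, if_pos rfl, map_mul, map_inv, hFof]
        simp only [hf, if_pos rfl, if_neg (Ne.symm hne)]
        group
      · simp only [hg, if_neg h, hFof, hf, if_neg h]
    have h1 := PresentedGroup.toGroup.unique relid (F.comp G) hid (x := x)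
    have h2 := PresentedGroup.toGroup.unique relid (MonoidHom.id _) (fun u => rfl) (x := x)
    exact h1.trans h2.symm
  refine ⟨⟨⟨F, G, hGF, hFG⟩, map_mul F⟩, ?_, ?_⟩
  · show F (RAAG.of Γ v) = _
    rw [hFof]
    simp [hf]
  · intro u hu
    show F (RAAG.of Γ u) = _
    rw [hFof]
    simp [hf, hu]
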